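/- Fix c ≥ 1 and set v_n := (2c)^{−|n|} for n ∈ ℤ. Let V be the bounded invertible operator on ℓ²(ℤ,ℂ) with (Vf)(n) = (v_n/v_{n−1})·f(n−1). Define f ∈ ℓ²(ℤ,ℂ) by f(n) = 1/|n| for n ≠ 0 and f(0) = 0 (this f is indeed square-summable). Then for every integer N (positive or negative), ‖V^N f‖² ≥ (2c)^{2|N|}/(|N|+1) ≥ 2^{|N|}·c^{2|N|}; moreover ‖V^N f‖ = ‖V^{−N} f‖ for all N. In particular ‖V^N f‖ grows at least like (√2·c)^{|N|} as N → ±∞. -/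

import Mathlib

noncomputable section
open Real

/-- The Hilbert space `ℓ²(ℤ, ℂ)` of square-summable two-sided complex sequences. -/
abbrev l2 : Type := lp (fun _ : ℤ => ℂ) 2

open scoped ENNReal

namespace Stmt17Aux

lemma telescope_sum (a m : ℕ) :
    ∑ i ∈ Finset.range m, (((a + i : ℕ) : ℝ)⁻¹ - ((a + i + 1 : ℕ) : ℝ)⁻¹)
      = ((a : ℝ)⁻¹ - ((a + m : ℕ) : ℝ)⁻¹) := by
  have h := Finset.sum_range_sub' (f := fun i => ((a + i : ℕ) : ℝ)⁻¹) m
  simp only [Nat.add_zero] at h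
  rw [← h]
  apply Finset.sum_congr rfl
  intro i _
  push_cast
  ring_nf

lemma sum_inv_sq_ge (n : ℕ) :
    ((n : ℝ) + 1)⁻¹ ≤ ∑ j ∈ Finset.Icc (max n 1) (n ^ 2 + n + 1), (((j : ℝ)) ^ 2)⁻¹ := by
  rcases Nat.eq_zero_or_pos n with rfl | hn
  · norm_num
  · have hmax : max n 1 = n := max_eq_left hn
    rw [hmax]
    have hle : ∀ j ∈ Finset.Icc n (n ^ 2 + n + 1),
        ((j : ℝ)⁻¹ - ((j : ℝ) + 1)⁻¹) ≤ (((j : ℝ)) ^ 2)⁻¹ := by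
      intro j hj
      have hj1 : 1 ≤ j := le_trans hn (Finset.mem_Icc.1 hj).1
      have hjR : (1 : ℝ) ≤ (j : ℝ) := by exact_mod_cast hj1
      have h0 : (0 : ℝ) < j := by linarith
      have h1 : (0 : ℝ) < (j : ℝ) + 1 := by linarith
      rw [inv_sub_inv (ne_of_gt h0) (ne_of_gt h1)]
      have : (j : ℝ) + 1 - j = 1 := by ring
      rw [this]
      rw [div_le_iff₀ (by positivity)]
      rw [inv_mul_eq_div, le_div_iff₀ (by positivity)]
      nlinarith
    have htel : ∑ j ∈ Finset.Icc n (n ^ 2 + n + 1), ((j : ℝ)⁻¹ - ((j : ℝ) + 1)⁻¹)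
        = (n : ℝ)⁻¹ - ((n ^ 2 + n + 2 : ℕ) : ℝ)⁻¹ := by
      rw [← Finset.Ico_add_one_right_eq_Icc, Finset.sum_Ico_eq_sum_range]
      have hm : n ^ 2 + n + 1 + 1 - n = n ^ 2 + 2 := by omega
      rw [hm]
      have h := telescope_sum n (n ^ 2 + 2)
      have harg : n + (n ^ 2 + 2) = n ^ 2 + n + 2 := by omega
      rw [harg] at h
      rw [← h]
      apply Finset.sum_congr rfl
      intro i _
      push_cast
      ring_nf
    calc ((n : ℝ) + 1)⁻¹ ≤ (n : ℝ)⁻¹ - ((n ^ 2 + n + 2 : ℕ) : ℝ)⁻¹ := by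
          have hnR : (1 : ℝ) ≤ (n : ℝ) := by exact_mod_cast hn
          have h2 : ((n ^ 2 + n + 2 : ℕ) : ℝ) = (n : ℝ) ^ 2 + n + 2 := by push_cast; ring
          rw [h2, le_sub_iff_add_le]
          rw [← one_div ((n : ℝ) + 1), ← one_div ((n : ℝ) ^ 2 + (n : ℝ) + 2), ← one_div (n : ℝ),
            div_add_div _ _ (by positivity) (by positivity),
            div_le_div_iff₀ (by positivity) (by positivity)]
          nlinarith
      _ ≤ _ := htel ▸ Finset.sum_le_sum hle

lemma l2_norm_sq (g : l2) : ‖g‖ ^ 2 = ∑' n : ℤ, ‖g n‖ ^ 2 := by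
  have h := lp.norm_rpow_eq_tsum (p := 2) (by norm_num) g
  rw [show ((2 : ℝ≥0∞)).toReal = ((2 : ℕ) : ℝ) from by norm_num] at h
  simpa [Real.rpow_natCast] using h

lemma l2_summable_sq (g : l2) : Summable (fun n : ℤ => ‖g n‖ ^ 2) := by
  have h := (lp.memℓp g).summable (p := 2) (by norm_num)
  rw [show ((2 : ℝ≥0∞)).toReal = ((2 : ℕ) : ℝ) from by norm_num] at h
  simpa [Real.rpow_natCast] using h

variable (v : ℤ → ℝ) (V : (l2 →L[ℂ] l2)ˣ)

lemma Vinv_apply (hvne : ∀ n, v n ≠ 0)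
    (hV : ∀ (g : l2) (n : ℤ),
      (V : l2 →L[ℂ] l2) g n = ((v n / v (n - 1) : ℝ) : ℂ) * g (n - 1))
    (g : l2) (n : ℤ) :
    ((V⁻¹ : (l2 →L[ℂ] l2)ˣ) : l2 →L[ℂ] l2) g n = ((v n / v (n + 1) : ℝ) : ℂ) * g (n + 1) := by
  have h0 : (V : l2 →L[ℂ] l2) (((V⁻¹ : (l2 →L[ℂ] l2)ˣ) : l2 →L[ℂ] l2) g) = g := by
    rw [← ContinuousLinearMap.mul_apply, ← Units.val_mul, mul_inv_cancel, Units.val_one,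
      ContinuousLinearMap.one_apply]
  have h1 := hV (((V⁻¹ : (l2 →L[ℂ] l2)ˣ) : l2 →L[ℂ] l2) g) (n + 1)
  rw [h0] at h1
  have h2 : n + 1 - 1 = n := by ring
  rw [h2] at h1
  have hb : ((v n : ℝ) : ℂ) ≠ 0 := by exact_mod_cast hvne n
  have hd : ((v (n + 1) : ℝ) : ℂ) ≠ 0 := by exact_mod_cast hvne (n + 1)
  rw [h1]
  push_cast
  field_simp

lemma pow_apply (hvne : ∀ n, v n ≠ 0)
    (hV : ∀ (g : l2) (n : ℤ),
      (V : l2 →L[ℂ] l2) g n = ((v n / v (n - 1) : ℝ) : ℂ) * g (n - 1)) :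
    ∀ (N : ℤ) (g : l2) (n : ℤ),
      ((V ^ N : (l2 →L[ℂ] l2)ˣ) : l2 →L[ℂ] l2) g n
        = ((v n / v (n - N) : ℝ) : ℂ) * g (n - N) := by
  intro N
  induction N using Int.induction_on with
  | zero =>
      intro g n
      simp [div_self (hvne n)]
  | succ k ih =>
      intro g n
      rw [zpow_add_one, Units.val_mul, ContinuousLinearMap.mul_apply, ih, hV]
      have e : n - (k : ℤ) - 1 = n - ((k : ℤ) + 1) := by ring
      have hb : ((v (n - (k : ℤ)) : ℝ) : ℂ) ≠ 0 := by exact_mod_cast hvne _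
      have hd : ((v (n - ((k : ℤ) + 1)) : ℝ) : ℂ) ≠ 0 := by exact_mod_cast hvne _
      rw [e, ← mul_assoc]
      congr 1
      push_cast
      field_simp
  | pred k ih =>
      intro g n
      rw [zpow_sub_one, Units.val_mul, ContinuousLinearMap.mul_apply, ih,
        Vinv_apply v V hvne hV]
      have e : n - -(k : ℤ) + 1 = n - (-(k : ℤ) - 1) := by ring
      have hb : ((v (n + (k : ℤ)) : ℝ) : ℂ) ≠ 0 := by exact_mod_cast hvne _
      have hd : ((v (n - (-(k : ℤ) - 1)) : ℝ) : ℂ) ≠ 0 := by exact_mod_cast hvne _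
      rw [e, ← mul_assoc]
      congr 1
      push_cast
      field_simp
      exact mul_div_cancel_right₀ _ (by exact_mod_cast hvne _)

end Stmt17Aux

/-- For the weighted bilateral shift `V` with weights `v n = (2c)^(−|n|)` (`c ≥ 1`) and the
vector `f` with `f n = 1/|n|` (`n ≠ 0`), `f 0 = 0`, one has, for every integer `N`,
`‖V^N f‖² ≥ (2c)^(2|N|)/(|N|+1) ≥ 2^|N|·c^(2|N|)`, and moreover `‖V^N f‖ = ‖V^(−N) f‖`. -/
theorem stmt17 (c : ℝ) (hc : 1 ≤ c)
    (v : ℤ → ℝ) (hv : ∀ n : ℤ, v n = (2 * c) ^ (-|(n : ℝ)|))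
    (V : (l2 →L[ℂ] l2)ˣ)
    (hV : ∀ (g : l2) (n : ℤ),
      (V : l2 →L[ℂ] l2) g n = ((v n / v (n - 1) : ℝ) : ℂ) * g (n - 1))
    (f : l2) (hf : ∀ n : ℤ, f n = if n = 0 then 0 else ((|(n : ℝ)|⁻¹ : ℝ) : ℂ)) :
    ∀ N : ℤ,
      (2 * c) ^ (2 * |N|) / ((|N| : ℝ) + 1) ≤
        ‖((V ^ N : (l2 →L[ℂ] l2)ˣ) : l2 →L[ℂ] l2) f‖ ^ 2 ∧
      (2 : ℝ) ^ |N| * c ^ (2 * |N|) ≤ (2 * c) ^ (2 * |N|) / ((|N| : ℝ) + 1) ∧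
      ‖((V ^ N : (l2 →L[ℂ] l2)ˣ) : l2 →L[ℂ] l2) f‖ =
        ‖((V ^ (-N) : (l2 →L[ℂ] l2)ˣ) : l2 →L[ℂ] l2) f‖ := by
  have h2c : (0 : ℝ) < 2 * c := by linarith
  have hvpos : ∀ n : ℤ, 0 < v n := by
    intro n; rw [hv]; exact Real.rpow_pos_of_pos h2c _
  have hvne : ∀ n : ℤ, v n ≠ 0 := fun n => (hvpos n).ne'
  have hpow := Stmt17Aux.pow_apply v V hvne hV
  have hterm : ∀ (N n : ℤ),
      ‖((V ^ N : (l2 →L[ℂ] l2)ˣ) : l2 →L[ℂ] l2) f n‖ ^ 2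
        = (v n / v (n - N)) ^ 2 * ‖f (n - N)‖ ^ 2 := by
    intro N n
    rw [hpow, norm_mul, Complex.norm_real, Real.norm_eq_abs,
      abs_of_pos (div_pos (hvpos n) (hvpos (n - N))), mul_pow]
  have hvsymm : ∀ n : ℤ, v (-n) = v n := by
    intro n; rw [hv, hv]; norm_num
  have hfsymm : ∀ n : ℤ, ‖f (-n)‖ = ‖f n‖ := by
    intro n
    rw [hf, hf]
    rcases eq_or_ne n 0 with rfl | h
    · norm_num
    · rw [if_neg h, if_neg (neg_ne_zero.mpr h)]
      norm_num
  have hsym : ∀ M : ℤ,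
      ‖((V ^ M : (l2 →L[ℂ] l2)ˣ) : l2 →L[ℂ] l2) f‖
        = ‖((V ^ (-M) : (l2 →L[ℂ] l2)ˣ) : l2 →L[ℂ] l2) f‖ := by
    intro M
    have hsq : ‖((V ^ M : (l2 →L[ℂ] l2)ˣ) : l2 →L[ℂ] l2) f‖ ^ 2
        = ‖((V ^ (-M) : (l2 →L[ℂ] l2)ˣ) : l2 →L[ℂ] l2) f‖ ^ 2 := by
      rw [Stmt17Aux.l2_norm_sq, Stmt17Aux.l2_norm_sq, ← (Equiv.neg ℤ).tsum_eq
        (fun n => ‖((V ^ (-M) : (l2 →L[ℂ] l2)ˣ) : l2 →L[ℂ] l2) f n‖ ^ 2)]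
      apply tsum_congr
      intro n
      simp only [Equiv.neg_apply]
      rw [hterm, hterm]
      have e1 : -n - -M = -(n - M) := by ring
      rw [e1, hvsymm n, hvsymm (n - M), hfsymm (n - M)]
    have ha := norm_nonneg (((V ^ M : (l2 →L[ℂ] l2)ˣ) : l2 →L[ℂ] l2) f)
    have hb := norm_nonneg (((V ^ (-M) : (l2 →L[ℂ] l2)ˣ) : l2 →L[ℂ] l2) f)
    nlinarith [hsq, ha, hb]
  have key : ∀ k : ℕ,
      (2 * c) ^ (2 * k) / ((k : ℝ) + 1)
        ≤ ‖((V ^ (k : ℤ) : (l2 →L[ℂ] l2)ˣ) : l2 →L[ℂ] l2) f‖ ^ 2 := by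
    intro k
    rw [Stmt17Aux.l2_norm_sq]
    have hJ : ∀ j ∈ Finset.Icc (max k 1) (k ^ 2 + k + 1),
        ‖((V ^ (k : ℤ) : (l2 →L[ℂ] l2)ˣ) : l2 →L[ℂ] l2) f ((k : ℤ) - j)‖ ^ 2
          = (2 * c) ^ (2 * k) * ((j : ℝ) ^ 2)⁻¹ := by
      intro j hj
      obtain ⟨hjl, hjr⟩ := Finset.mem_Icc.1 hj
      have hj1 : 1 ≤ j := le_trans (le_max_right _ _) hjl
      have hjk : k ≤ j := le_trans (le_max_left _ _) hjl
      rw [hterm]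
      have e1 : (k : ℤ) - j - k = -(j : ℤ) := by ring
      rw [e1]
      have hr : v ((k : ℤ) - j) / v (-(j : ℤ)) = (2 * c) ^ k := by
        rw [hv, hv]
        have h2 : (((k : ℤ) - (j : ℤ) : ℤ) : ℝ) = (k : ℝ) - j := by push_cast; ring
        have h3 : ((-(j : ℤ) : ℤ) : ℝ) = -(j : ℝ) := by push_cast; ring
        rw [h2, h3, abs_of_nonpos (sub_nonpos.mpr (by exact_mod_cast hjk)), abs_neg,
          abs_of_nonneg (by positivity), ← Real.rpow_natCast (2 * c) k,
          ← Real.rpow_sub h2c]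
        congr 1
        push_cast
        ring
      have hfj : ‖f (-(j : ℤ))‖ = (j : ℝ)⁻¹ := by
        rw [hf, if_neg (show -(j : ℤ) ≠ 0 by omega)]
        have h4 : |((-(j : ℤ) : ℤ) : ℝ)| = (j : ℝ) := by
          push_cast
          rw [abs_neg, abs_of_nonneg (by positivity)]
        rw [h4, Complex.norm_real, Real.norm_eq_abs, abs_of_nonneg (by positivity)]
      rw [hr, hfj, ← pow_mul, mul_comm k 2, inv_pow]
    have hinj : ∀ a ∈ Finset.Icc (max k 1) (k ^ 2 + k + 1),
        ∀ b ∈ Finset.Icc (max k 1) (k ^ 2 + k + 1),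
        (k : ℤ) - a = (k : ℤ) - b → a = b := by
      intro a _ b _ h
      omega
    calc (2 * c) ^ (2 * k) / ((k : ℝ) + 1)
        = (2 * c) ^ (2 * k) * ((k : ℝ) + 1)⁻¹ := div_eq_mul_inv _ _
      _ ≤ (2 * c) ^ (2 * k) * ∑ j ∈ Finset.Icc (max k 1) (k ^ 2 + k + 1), ((j : ℝ) ^ 2)⁻¹ :=
          mul_le_mul_of_nonneg_left (Stmt17Aux.sum_inv_sq_ge k) (by positivity)
      _ = ∑ j ∈ Finset.Icc (max k 1) (k ^ 2 + k + 1), (2 * c) ^ (2 * k) * ((j : ℝ) ^ 2)⁻¹ :=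
          Finset.mul_sum _ _ _
      _ = ∑ m ∈ (Finset.Icc (max k 1) (k ^ 2 + k + 1)).image (fun j : ℕ => (k : ℤ) - j),
            ‖((V ^ (k : ℤ) : (l2 →L[ℂ] l2)ˣ) : l2 →L[ℂ] l2) f m‖ ^ 2 := by
          rw [Finset.sum_image hinj]
          exact (Finset.sum_congr rfl hJ).symm
      _ ≤ ∑' m : ℤ, ‖((V ^ (k : ℤ) : (l2 →L[ℂ] l2)ˣ) : l2 →L[ℂ] l2) f m‖ ^ 2 :=
          Summable.sum_le_tsum _ (fun m _ => by positivity) (Stmt17Aux.l2_summable_sq _)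
  intro N
  set k := N.natAbs with hk
  have hNk : |N| = (k : ℤ) := Int.abs_eq_natAbs N
  have hcast1 : (2 * c) ^ (2 * |N|) = (2 * c) ^ (2 * k) := by
    rw [hNk, show (2 * (k : ℤ)) = ((2 * k : ℕ) : ℤ) by push_cast; ring, zpow_natCast]
  have hcast2 : |((N : ℤ) : ℝ)| = (k : ℝ) := by rw [← Int.cast_abs, hNk]; simp
  have hnorm : (2 * c) ^ (2 * k) / ((k : ℝ) + 1)
      ≤ ‖((V ^ N : (l2 →L[ℂ] l2)ˣ) : l2 →L[ℂ] l2) f‖ ^ 2 := by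
    rcases Int.natAbs_eq N with h | h
    · rw [show N = (k : ℤ) from h]
      exact key k
    · rw [hsym N, show -N = (k : ℤ) by omega]
      exact key k
  refine ⟨?_, ?_, hsym N⟩
  · rw [hcast1, hcast2]
    exact hnorm
  · rw [hcast1, hcast2, hNk, show (2 * (k : ℤ)) = ((2 * k : ℕ) : ℤ) by push_cast; ring,
      zpow_natCast, zpow_natCast]
    have h1 : ((k : ℝ) + 1) ≤ 2 ^ k := by
      have h := k.lt_two_pow_self
      have h' : (k + 1 : ℕ) ≤ 2 ^ k := h
      exact_mod_cast h'
    rw [le_div_iff₀ (by positivity)]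
    have e : (2 * c) ^ (2 * k) = (2 ^ k * 2 ^ k) * c ^ (2 * k) := by
      rw [mul_pow, two_mul k, pow_add]
    rw [e]
    have hcp : (0 : ℝ) < c ^ (2 * k) := by positivity
    have h2p : (0 : ℝ) < (2 : ℝ) ^ k := by positivity
    nlinarith [mul_le_mul_of_nonneg_left h1 (le_of_lt (mul_pos h2p hcp))]
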